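/- arXiv:1009.6227 — 2 statements merged into one kernel-verified Lean document; each statement's English description precedes it below -/
import Mathlib

section
/- There is an absolute constant C such that for all Schwartz functions u on ℝ², the Gagliardo–Nirenberg inequality ‖u‖_{L^∞(ℝ²)} ≤ C ‖u‖_{L²(ℝ²)}^{1/3} ‖∇u‖_{L⁴(ℝ²)}^{2/3} holds. -/
open MeasureTheory Real Filter
open scoped ENNReal
open scoped NNReal
open Metric

local notation "E2" => EuclideanSpace ℝ (Fin 2)

lemma gn_lintegral_pow_lt_top {V : Type*} [NormedAddCommGroup V] [NormedSpace ℝ V]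
    (g : SchwartzMap E2 V) (n : ℕ) (hn : 1 ≤ n) :
    ∫⁻ z, (‖g z‖₊ : ℝ≥0∞) ^ (n : ℝ) < ⊤ := by
  set M : ℝ≥0 := ‖SchwartzMap.seminorm ℝ 0 0 g‖₊ with hM
  have hb : ∀ z, ‖g z‖₊ ≤ M := by
    intro z
    rw [hM]
    have := g.norm_le_seminorm ℝ z
    simpa [← NNReal.coe_le_coe, nnnorm, norm_of_nonneg (apply_nonneg _ _)] using this
  have hpt : ∀ z, (‖g z‖₊ : ℝ≥0∞) ^ (n : ℝ) ≤ (M : ℝ≥0∞) ^ (n - 1) * ‖g z‖₊ := by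
    intro z
    rw [ENNReal.rpow_natCast]
    calc (‖g z‖₊ : ℝ≥0∞) ^ n = (‖g z‖₊ : ℝ≥0∞) ^ (n - 1) * ‖g z‖₊ := by
          conv_lhs => rw [show n = (n-1) + 1 from (Nat.succ_pred_eq_of_pos hn).symm]
          rw [pow_succ]
      _ ≤ (M : ℝ≥0∞) ^ (n - 1) * ‖g z‖₊ := by
          gcongr
          exact_mod_cast hb z
  calc ∫⁻ z, (‖g z‖₊ : ℝ≥0∞) ^ (n : ℝ) ≤ ∫⁻ z, (M : ℝ≥0∞) ^ (n - 1) * ‖g z‖₊ :=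
        lintegral_mono hpt
    _ = (M : ℝ≥0∞) ^ (n - 1) * ∫⁻ z, (‖g z‖₊ : ℝ≥0∞) :=
        lintegral_const_mul _ (g.continuous.nnnorm.measurable.coe_nnreal_ennreal)
    _ < ⊤ := by
        refine ENNReal.mul_lt_top (ENNReal.pow_lt_top ENNReal.coe_lt_top) ?_
        exact (g.integrable (μ := volume)).2

lemma gn_eLpNorm_ne_top {V : Type*} [NormedAddCommGroup V] [NormedSpace ℝ V]
    (g : SchwartzMap E2 V) (n : ℕ) (hn : 1 ≤ n) :
    eLpNorm g (n : ℝ≥0∞) volume ≠ ⊤ := by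
  rw [eLpNorm_eq_lintegral_rpow_enorm_toReal (by exact_mod_cast (Nat.pos_of_ne_zero (by omega)).ne')
    (by simp)]
  rw [show ((n:ℝ≥0∞)).toReal = (n:ℝ) by simp]
  exact (ENNReal.rpow_lt_top_of_nonneg (by positivity) (gn_lintegral_pow_lt_top g n hn).ne).ne

lemma gn_ftc_seg (u : SchwartzMap E2 ℝ) (x z : E2) :
    |u z - u x| ≤ ∫ t in (0:ℝ)..1, ‖fderiv ℝ u (x + t • (z - x))‖ * ‖z - x‖ := by
  set L : ℝ → E2 := fun t => x + t • (z - x) with hLdef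
  have hL : ∀ t : ℝ, HasDerivAt L (z - x) t := by
    intro t
    simpa [hLdef] using (((hasDerivAt_id t).smul_const (z - x)).const_add x)
  have hfc : Continuous (fun y => fderiv ℝ u y) :=
    (u.smooth ⊤).continuous_fderiv (by simp)
  have hLc : Continuous L := by fun_prop
  have hgc : Continuous (fun t => (fderiv ℝ u (L t)) (z - x)) :=
    (hfc.comp hLc).clm_apply continuous_const
  have hg : ∀ t ∈ Set.uIcc (0:ℝ) 1, HasDerivAt (fun s => u (L s)) ((fderiv ℝ u (L t)) (z - x)) t :=
    fun t _ => (u.differentiableAt.hasFDerivAt).comp_hasDerivAt t (hL t)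
  have key : u (L 1) - u (L 0) = ∫ t in (0:ℝ)..1, (fderiv ℝ u (L t)) (z - x) :=
    (intervalIntegral.integral_eq_sub_of_hasDerivAt hg (hgc.intervalIntegrable 0 1)).symm
  have hL1 : L 1 = z := by simp [hLdef]
  have hL0 : L 0 = x := by simp [hLdef]
  rw [hL1, hL0] at key
  calc |u z - u x| = ‖∫ t in (0:ℝ)..1, (fderiv ℝ u (L t)) (z - x)‖ := by rw [← key]; rfl
    _ ≤ ∫ t in (0:ℝ)..1, ‖(fderiv ℝ u (L t)) (z - x)‖ :=
        intervalIntegral.norm_integral_le_integral_norm zero_le_one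
    _ ≤ ∫ t in (0:ℝ)..1, ‖fderiv ℝ u (L t)‖ * ‖z - x‖ := by
        apply intervalIntegral.integral_mono_on zero_le_one (hgc.norm.intervalIntegrable _ _)
          (((hfc.comp hLc).norm.mul continuous_const).intervalIntegrable _ _)
        intro t _
        exact (fderiv ℝ u (L t)).le_opNorm _

lemma gn_scaling (t : ℝ) (ht : t ≠ 0) (g : E2 → ℝ≥0∞) (hg : Measurable g) :
    ∫⁻ w, g (t • w) = ENNReal.ofReal |(t ^ 2)⁻¹| * ∫⁻ y, g y := by
  rw [← lintegral_map hg (measurable_const_smul t), Measure.map_addHaar_smul volume ht]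
  simp [lintegral_smul_measure, finrank_euclideanSpace]

lemma gn_inner (u : SchwartzMap E2 ℝ) (x : E2) (r : ℝ) (hr : 0 < r) {t : ℝ}
    (ht : t ∈ Set.Ioc (0:ℝ) 1) :
    ∫⁻ z in ball x r, ENNReal.ofReal (‖fderiv ℝ u (x + t • (z - x))‖ * ‖z - x‖) ≤
      ENNReal.ofReal (t ^ (-(1:ℝ)/2)) *
        (eLpNorm (fun z => fderiv ℝ u z) 4 volume *
          (ENNReal.ofReal r * (volume (ball x r)) ^ ((3:ℝ)/4))) := by
  obtain ⟨ht0, ht1⟩ := ht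
  have hfc : Continuous (fun y => fderiv ℝ u y) :=
    (u.smooth ⊤).continuous_fderiv (by simp)
  set B : Set E2 := ball x r with hB
  set V : ℝ≥0∞ := volume B with hV
  have conj : Real.HolderConjugate 4 (4/3) := ⟨by norm_num, by norm_num, by norm_num⟩
  have hmeas1 : AEMeasurable (fun z : E2 => (‖fderiv ℝ u (x + t • (z - x))‖₊ : ℝ≥0∞))
      (volume.restrict B) := by
    apply Measurable.aemeasurable
    exact ((hfc.comp (by fun_prop)).nnnorm.measurable).coe_nnreal_ennreal
  have hmeas2 : AEMeasurable (fun z : E2 => (‖z - x‖₊ : ℝ≥0∞)) (volume.restrict B) := by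
    apply Measurable.aemeasurable
    exact ((continuous_id.sub continuous_const).nnnorm.measurable).coe_nnreal_ennreal
  have hpt : ∀ z : E2, ENNReal.ofReal (‖fderiv ℝ u (x + t • (z - x))‖ * ‖z - x‖) =
      (‖fderiv ℝ u (x + t • (z - x))‖₊ : ℝ≥0∞) * (‖z - x‖₊ : ℝ≥0∞) := by
    intro z
    rw [ENNReal.ofReal_mul (norm_nonneg _), ofReal_norm, ofReal_norm, enorm_eq_nnnorm, enorm_eq_nnnorm]
  have holder := ENNReal.lintegral_mul_le_Lp_mul_Lq (volume.restrict B) conj hmeas1 hmeas2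
  simp only [Pi.mul_apply] at holder
  have step1 : ∫⁻ z in B, ENNReal.ofReal (‖fderiv ℝ u (x + t • (z - x))‖ * ‖z - x‖) ≤
      (∫⁻ z in B, (‖fderiv ℝ u (x + t • (z - x))‖₊ : ℝ≥0∞) ^ (4:ℝ)) ^ ((1:ℝ)/4) *
      (∫⁻ z in B, (‖z - x‖₊ : ℝ≥0∞) ^ ((4:ℝ)/3)) ^ ((1:ℝ)/(4/3)) := by
    calc ∫⁻ z in B, ENNReal.ofReal (‖fderiv ℝ u (x + t • (z - x))‖ * ‖z - x‖)
        = ∫⁻ z in B, (‖fderiv ℝ u (x + t • (z - x))‖₊ : ℝ≥0∞) * (‖z - x‖₊ : ℝ≥0∞) := by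
          exact lintegral_congr fun z => hpt z
      _ ≤ _ := holder
  -- second factor
  have hfac2 : (∫⁻ z in B, (‖z - x‖₊ : ℝ≥0∞) ^ ((4:ℝ)/3)) ^ ((1:ℝ)/(4/3)) ≤
      ENNReal.ofReal r * V ^ ((3:ℝ)/4) := by
    have hb : ∀ z ∈ B, (‖z - x‖₊ : ℝ≥0∞) ^ ((4:ℝ)/3) ≤ (ENNReal.ofReal r) ^ ((4:ℝ)/3) := by
      intro z hz
      apply ENNReal.rpow_le_rpow _ (by norm_num)
      rw [← enorm_eq_nnnorm, ← ofReal_norm]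
      apply ENNReal.ofReal_le_ofReal
      rw [← dist_eq_norm]
      exact (mem_ball.mp hz).le
    calc (∫⁻ z in B, (‖z - x‖₊ : ℝ≥0∞) ^ ((4:ℝ)/3)) ^ ((1:ℝ)/(4/3))
        ≤ ((ENNReal.ofReal r) ^ ((4:ℝ)/3) * V) ^ ((1:ℝ)/(4/3)) := by
          apply ENNReal.rpow_le_rpow _ (by norm_num)
          calc ∫⁻ z in B, (‖z - x‖₊ : ℝ≥0∞) ^ ((4:ℝ)/3)
              ≤ ∫⁻ _ in B, (ENNReal.ofReal r) ^ ((4:ℝ)/3) :=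
                setLIntegral_mono (by measurability) hb
            _ = (ENNReal.ofReal r) ^ ((4:ℝ)/3) * V := setLIntegral_const _ _
      _ = ENNReal.ofReal r * V ^ ((3:ℝ)/4) := by
          rw [ENNReal.mul_rpow_of_nonneg _ _ (by norm_num), ← ENNReal.rpow_mul]
          norm_num
  -- first factor
  have hfac1 : (∫⁻ z in B, (‖fderiv ℝ u (x + t • (z - x))‖₊ : ℝ≥0∞) ^ (4:ℝ)) ^ ((1:ℝ)/4) ≤
      ENNReal.ofReal (t ^ (-(1:ℝ)/2)) * eLpNorm (fun z => fderiv ℝ u z) 4 volume := by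
    set G : E2 → ℝ≥0∞ := fun w => (‖fderiv ℝ u w‖₊ : ℝ≥0∞) ^ (4:ℝ) with hG
    have hGmeas : Measurable G := by
      exact (hfc.nnnorm.measurable.coe_nnreal_ennreal).pow_const _
    have hsub : ∀ z : E2, x + t • (z - x) = (x - t • x) + t • z := by
      intro z; module
    have key : ∫⁻ z in B, G (x + t • (z - x)) ≤ ENNReal.ofReal ((t^2)⁻¹) * ∫⁻ w, G w := by
      calc ∫⁻ z in B, G (x + t • (z - x)) ≤ ∫⁻ z, G (x + t • (z - x)) :=
            setLIntegral_le_lintegral _ _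
        _ = ∫⁻ z, G ((x - t • x) + t • z) := by simp_rw [hsub]
        _ = ENNReal.ofReal |(t ^ 2)⁻¹| * ∫⁻ w, G ((x - t • x) + w) := by
            exact gn_scaling t ht0.ne' (fun w => G ((x - t • x) + w))
              (hGmeas.comp (measurable_const_add _))
        _ = ENNReal.ofReal ((t ^ 2)⁻¹) * ∫⁻ w, G w := by
            rw [lintegral_add_left_eq_self (fun w => G w) (x - t • x),
              abs_of_nonneg (by positivity)]
    have hS4 : (∫⁻ w, G w) ^ ((1:ℝ)/4) = eLpNorm (fun z => fderiv ℝ u z) 4 volume := by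
      rw [eLpNorm_eq_lintegral_rpow_enorm_toReal (by norm_num) (by norm_num), hG]
      norm_num
      rfl
    calc (∫⁻ z in B, (‖fderiv ℝ u (x + t • (z - x))‖₊ : ℝ≥0∞) ^ (4:ℝ)) ^ ((1:ℝ)/4)
        ≤ (ENNReal.ofReal ((t^2)⁻¹) * ∫⁻ w, G w) ^ ((1:ℝ)/4) :=
          ENNReal.rpow_le_rpow key (by norm_num)
      _ = (ENNReal.ofReal ((t^2)⁻¹)) ^ ((1:ℝ)/4) * (∫⁻ w, G w) ^ ((1:ℝ)/4) :=
          ENNReal.mul_rpow_of_nonneg _ _ (by norm_num)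
      _ = ENNReal.ofReal (t ^ (-(1:ℝ)/2)) * eLpNorm (fun z => fderiv ℝ u z) 4 volume := by
          rw [hS4, ENNReal.ofReal_rpow_of_pos (by positivity)]
          congr 2
          rw [← Real.rpow_natCast t 2, ← Real.rpow_neg_one ((t:ℝ) ^ ((2:ℕ):ℝ)),
            ← Real.rpow_mul (by positivity), ← Real.rpow_mul ht0.le]
          norm_num
  calc ∫⁻ z in B, ENNReal.ofReal (‖fderiv ℝ u (x + t • (z - x))‖ * ‖z - x‖)
      ≤ _ := step1
    _ ≤ (ENNReal.ofReal (t ^ (-(1:ℝ)/2)) * eLpNorm (fun z => fderiv ℝ u z) 4 volume) *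
        (ENNReal.ofReal r * V ^ ((3:ℝ)/4)) := mul_le_mul' hfac1 hfac2
    _ = _ := by ring

lemma gn_ball_bound (u : SchwartzMap E2 ℝ) (x : E2) (r : ℝ) (hr : 0 < r) :
    (‖u x‖₊ : ℝ≥0∞) * volume (ball x r) ≤
      ENNReal.ofReal 2 * ENNReal.ofReal r *
          eLpNorm (fun z => fderiv ℝ u z) 4 volume * (volume (ball x r)) ^ ((3:ℝ)/4)
        + eLpNorm (⇑u) 2 volume * (volume (ball x r)) ^ ((1:ℝ)/2) := by
  have hfc : Continuous (fun y => fderiv ℝ u y) :=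
    (u.smooth ⊤).continuous_fderiv (by simp)
  set B : Set E2 := ball x r with hB
  set V : ℝ≥0∞ := volume B with hV
  set S4 : ℝ≥0∞ := eLpNorm (fun z => fderiv ℝ u z) 4 volume with hS4
  set S2 : ℝ≥0∞ := eLpNorm (⇑u) 2 volume with hS2
  have hmeas_d : Measurable (fun z : E2 => ENNReal.ofReal |u x - u z|) := by
    exact (continuous_const.sub u.continuous).abs.measurable.ennreal_ofReal
  -- splitting
  have split : (‖u x‖₊ : ℝ≥0∞) * V ≤
      (∫⁻ z in B, ENNReal.ofReal |u x - u z|) + ∫⁻ z in B, (‖u z‖₊ : ℝ≥0∞) := by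
    calc (‖u x‖₊ : ℝ≥0∞) * V = ∫⁻ _ in B, (‖u x‖₊ : ℝ≥0∞) := (setLIntegral_const _ _).symm
      _ ≤ ∫⁻ z in B, (ENNReal.ofReal |u x - u z| + (‖u z‖₊ : ℝ≥0∞)) := by
          apply lintegral_mono
          intro z
          show (‖u x‖₊ : ℝ≥0∞) ≤ ENNReal.ofReal |u x - u z| + (‖u z‖₊ : ℝ≥0∞)
          rw [← enorm_eq_nnnorm, Real.enorm_eq_ofReal_abs, ← enorm_eq_nnnorm, Real.enorm_eq_ofReal_abs, ← ENNReal.ofReal_add (abs_nonneg _)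
            (abs_nonneg _)]
          apply ENNReal.ofReal_le_ofReal
          calc |u x| = |(u x - u z) + u z| := by ring_nf
            _ ≤ |u x - u z| + |u z| := abs_add_le _ _
      _ = _ := lintegral_add_left hmeas_d _
  -- term 2 : Cauchy-Schwarz
  have term2 : ∫⁻ z in B, (‖u z‖₊ : ℝ≥0∞) ≤ S2 * V ^ ((1:ℝ)/2) := by
    have conj : Real.HolderConjugate 2 2 := ⟨by norm_num, by norm_num, by norm_num⟩
    have h1 : AEMeasurable (fun z : E2 => (‖u z‖₊ : ℝ≥0∞)) (volume.restrict B) :=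
      (u.continuous.nnnorm.measurable.coe_nnreal_ennreal).aemeasurable
    have holder := ENNReal.lintegral_mul_le_Lp_mul_Lq (volume.restrict B) conj h1
      (aemeasurable_const (b := (1:ℝ≥0∞)))
    simp only [Pi.mul_apply, mul_one, ENNReal.one_rpow] at holder
    calc ∫⁻ z in B, (‖u z‖₊ : ℝ≥0∞)
        ≤ (∫⁻ z in B, (‖u z‖₊ : ℝ≥0∞) ^ (2:ℝ)) ^ ((1:ℝ)/2) * (∫⁻ _ in B, 1) ^ ((1:ℝ)/2) := by
          exact_mod_cast holder
      _ ≤ S2 * V ^ ((1:ℝ)/2) := by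
          apply mul_le_mul'
          · rw [hS2, eLpNorm_eq_lintegral_rpow_enorm_toReal (by norm_num) (by norm_num)]
            norm_num
            apply ENNReal.rpow_le_rpow _ (by norm_num)
            exact setLIntegral_le_lintegral _ _
          · rw [lintegral_one, Measure.restrict_apply_univ]
  -- term 1
  have term1 : ∫⁻ z in B, ENNReal.ofReal |u x - u z| ≤
      ENNReal.ofReal 2 * (S4 * (ENNReal.ofReal r * V ^ ((3:ℝ)/4))) := by
    have pt : ∀ z : E2, ENNReal.ofReal |u x - u z| ≤
        ∫⁻ t in Set.Ioc (0:ℝ) 1, ENNReal.ofReal (‖fderiv ℝ u (x + t • (z - x))‖ * ‖z - x‖) := by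
      intro z
      have hcont : Continuous (fun t : ℝ => ‖fderiv ℝ u (x + t • (z - x))‖ * ‖z - x‖) := by
        exact ((hfc.comp (by fun_prop)).norm.mul continuous_const)
      have hint : IntegrableOn (fun t : ℝ => ‖fderiv ℝ u (x + t • (z - x))‖ * ‖z - x‖)
          (Set.Ioc 0 1) volume := hcont.integrableOn_Ioc
      calc ENNReal.ofReal |u x - u z|
          ≤ ENNReal.ofReal (∫ t in (0:ℝ)..1, ‖fderiv ℝ u (x + t • (z - x))‖ * ‖z - x‖) := by
            apply ENNReal.ofReal_le_ofReal
            rw [abs_sub_comm]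
            exact gn_ftc_seg u x z
        _ = _ := by
            rw [intervalIntegral.integral_of_le zero_le_one,
              ofReal_integral_eq_lintegral_ofReal hint
                (Filter.Eventually.of_forall fun t => by positivity)]
    have swap : ∫⁻ z in B, (∫⁻ t in Set.Ioc (0:ℝ) 1,
          ENNReal.ofReal (‖fderiv ℝ u (x + t • (z - x))‖ * ‖z - x‖)) =
        ∫⁻ t in Set.Ioc (0:ℝ) 1, (∫⁻ z in B,
          ENNReal.ofReal (‖fderiv ℝ u (x + t • (z - x))‖ * ‖z - x‖)) := by
      apply lintegral_lintegral_swap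
      apply Measurable.aemeasurable
      have : Continuous (fun p : E2 × ℝ => ‖fderiv ℝ u (x + p.2 • (p.1 - x))‖ * ‖p.1 - x‖) := by
        exact (hfc.comp (by fun_prop)).norm.mul (by fun_prop)
      exact this.measurable.ennreal_ofReal
    have bound : ∫⁻ t in Set.Ioc (0:ℝ) 1, (∫⁻ z in B,
          ENNReal.ofReal (‖fderiv ℝ u (x + t • (z - x))‖ * ‖z - x‖)) ≤
        ∫⁻ t in Set.Ioc (0:ℝ) 1,
          ENNReal.ofReal (t ^ (-(1:ℝ)/2)) * (S4 * (ENNReal.ofReal r * V ^ ((3:ℝ)/4))) := by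
      apply setLIntegral_mono
      · exact ((measurable_id.pow_const _).ennreal_ofReal).mul_const _
      · intro t ht
        exact gn_inner u x r hr ht
    have eval : ∫⁻ t in Set.Ioc (0:ℝ) 1,
          ENNReal.ofReal (t ^ (-(1:ℝ)/2)) * (S4 * (ENNReal.ofReal r * V ^ ((3:ℝ)/4))) =
        ENNReal.ofReal 2 * (S4 * (ENNReal.ofReal r * V ^ ((3:ℝ)/4))) := by
      have hm : Measurable fun t : ℝ => ENNReal.ofReal (t ^ (-(1:ℝ)/2)) :=
        (measurable_id.pow_const _).ennreal_ofReal
      rw [lintegral_mul_const _ hm]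
      congr 1
      have hint2 : IntegrableOn (fun t : ℝ => t ^ (-(1:ℝ)/2)) (Set.Ioc 0 1) volume := by
        have := (intervalIntegral.intervalIntegrable_rpow' (a := 0) (b := 1)
          (r := -(1:ℝ)/2) (by norm_num))
        exact this.1
      rw [← ofReal_integral_eq_lintegral_ofReal hint2
        ((ae_restrict_iff' measurableSet_Ioc).2 (Filter.Eventually.of_forall fun t ht =>
          Real.rpow_nonneg ht.1.le _))]
      congr 1
      rw [← intervalIntegral.integral_of_le zero_le_one,
        integral_rpow (Or.inl (by norm_num))]
      norm_num
    calc ∫⁻ z in B, ENNReal.ofReal |u x - u z| ≤ ∫⁻ z in B, (∫⁻ t in Set.Ioc (0:ℝ) 1,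
          ENNReal.ofReal (‖fderiv ℝ u (x + t • (z - x))‖ * ‖z - x‖)) := lintegral_mono pt
      _ = _ := swap
      _ ≤ _ := bound
      _ = _ := eval
  calc (‖u x‖₊ : ℝ≥0∞) * V ≤ _ := split
    _ ≤ ENNReal.ofReal 2 * (S4 * (ENNReal.ofReal r * V ^ ((3:ℝ)/4))) + S2 * V ^ ((1:ℝ)/2) :=
        add_le_add term1 term2
    _ = _ := by ring

lemma gn_S2_ne_top (u : SchwartzMap E2 ℝ) : eLpNorm (⇑u) 2 volume ≠ ⊤ := by
  simpa using gn_eLpNorm_ne_top u 2 (by norm_num)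

lemma gn_S4_ne_top (u : SchwartzMap E2 ℝ) :
    eLpNorm (fun z => fderiv ℝ u z) 4 volume ≠ ⊤ := by
  have h : (fun z => fderiv ℝ u z) = ⇑(SchwartzMap.fderivCLM ℝ E2 ℝ u) := by
    funext z
    rw [SchwartzMap.fderivCLM_apply]
  rw [h]
  simpa using gn_eLpNorm_ne_top (SchwartzMap.fderivCLM ℝ E2 ℝ u) 4 (by norm_num)

lemma gn_pointwise (u : SchwartzMap E2 ℝ) (x : E2) (r : ℝ) (hr : 0 < r) :
    |u x| ≤ r⁻¹ * (eLpNorm (⇑u) 2 volume).toReal +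
      2 * r ^ ((1:ℝ)/2) * (eLpNorm (fun z => fderiv ℝ u z) 4 volume).toReal := by
  set A : ℝ := (eLpNorm (⇑u) 2 volume).toReal with hA
  set D : ℝ := (eLpNorm (fun z => fderiv ℝ u z) 4 volume).toReal with hD
  have hA0 : 0 ≤ A := ENNReal.toReal_nonneg
  have hD0 : 0 ≤ D := ENNReal.toReal_nonneg
  have hVne : volume (ball x r) ≠ ⊤ := measure_ball_lt_top.ne
  have hVval : (volume (ball x r)).toReal = π * r ^ 2 := by
    rw [EuclideanSpace.volume_ball]
    have h : Real.Gamma ((Fintype.card (Fin 2) : ℝ)/2 + 1) = 1 := by norm_num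
    rw [h]
    rw [ENNReal.toReal_mul, ENNReal.toReal_pow, ENNReal.toReal_ofReal hr.le,
      ENNReal.toReal_ofReal (by positivity)]
    rw [show (Fintype.card (Fin 2)) = 2 by norm_num]
    rw [sq_sqrt pi_nonneg]
    ring
  have hmain : |u x| * (π * r ^ 2) ≤
      2 * r * D * (π * r ^ 2) ^ ((3:ℝ)/4) + A * (π * r ^ 2) ^ ((1:ℝ)/2) := by
    have h := gn_ball_bound u x r hr
    have hrhs_ne : ENNReal.ofReal 2 * ENNReal.ofReal r *
          eLpNorm (fun z => fderiv ℝ u z) 4 volume * (volume (ball x r)) ^ ((3:ℝ)/4)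
        + eLpNorm (⇑u) 2 volume * (volume (ball x r)) ^ ((1:ℝ)/2) ≠ ⊤ := by
      apply ENNReal.add_ne_top.2
      constructor
      · exact ENNReal.mul_ne_top (ENNReal.mul_ne_top
          (ENNReal.mul_ne_top ENNReal.ofReal_ne_top ENNReal.ofReal_ne_top) (gn_S4_ne_top u))
          (ENNReal.rpow_ne_top_of_nonneg (by norm_num) hVne)
      · exact ENNReal.mul_ne_top (gn_S2_ne_top u)
          (ENNReal.rpow_ne_top_of_nonneg (by norm_num) hVne)
    have := ENNReal.toReal_mono hrhs_ne h
    rw [ENNReal.toReal_mul, ENNReal.toReal_add (by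
        exact ENNReal.mul_ne_top (ENNReal.mul_ne_top
          (ENNReal.mul_ne_top ENNReal.ofReal_ne_top ENNReal.ofReal_ne_top) (gn_S4_ne_top u))
          (ENNReal.rpow_ne_top_of_nonneg (by norm_num) hVne)) (by
        exact ENNReal.mul_ne_top (gn_S2_ne_top u)
          (ENNReal.rpow_ne_top_of_nonneg (by norm_num) hVne)),
      ENNReal.toReal_mul, ENNReal.toReal_mul, ENNReal.toReal_mul, ENNReal.toReal_mul,
      ENNReal.toReal_ofReal (by norm_num : (0:ℝ) ≤ 2), ENNReal.toReal_ofReal hr.le,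
      ← ENNReal.toReal_rpow, ← ENNReal.toReal_rpow, hVval] at this
    simp only [ENNReal.coe_toReal, coe_nnnorm, Real.norm_eq_abs] at this
    rw [← hA, ← hD] at this
    linarith
  set P : ℝ := π * r ^ 2 with hPdef
  have hPpos : 0 < P := by positivity
  have hπ : (1:ℝ) ≤ π := by linarith [pi_gt_three]
  have hr2P : r ^ 2 ≤ P := by nlinarith [sq_nonneg r]
  have hsq : ∀ s : ℝ, 0 ≤ s → (s ^ 2) ^ ((1:ℝ)/2) = s := by
    intro s hs
    rw [← Real.rpow_natCast s 2, ← Real.rpow_mul hs]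
    norm_num
  have hq : ∀ s : ℝ, 0 ≤ s → (s ^ 2) ^ ((1:ℝ)/4) = s ^ ((1:ℝ)/2) := by
    intro s hs
    rw [← Real.rpow_natCast s 2, ← Real.rpow_mul hs]
    norm_num
  have h12 : r ≤ P ^ ((1:ℝ)/2) := by
    calc r = (r ^ 2) ^ ((1:ℝ)/2) := (hsq r hr.le).symm
      _ ≤ P ^ ((1:ℝ)/2) := Real.rpow_le_rpow (sq_nonneg r) hr2P (by norm_num)
  have h14 : r ^ ((1:ℝ)/2) ≤ P ^ ((1:ℝ)/4) := by
    calc r ^ ((1:ℝ)/2) = (r ^ 2) ^ ((1:ℝ)/4) := (hq r hr.le).symm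
      _ ≤ P ^ ((1:ℝ)/4) := Real.rpow_le_rpow (sq_nonneg r) hr2P (by norm_num)
  have hP43 : P ^ ((1:ℝ)/4) * P ^ ((3:ℝ)/4) = P := by
    rw [← Real.rpow_add hPpos]
    norm_num
  have hP12 : P ^ ((1:ℝ)/2) * P ^ ((1:ℝ)/2) = P := by
    rw [← Real.rpow_add hPpos]
    norm_num
  have hrr : r ^ ((1:ℝ)/2) * r ^ ((1:ℝ)/2) = r := by
    rw [← Real.rpow_add hr]
    norm_num
  have part1 : 2 * r * D * P ^ ((3:ℝ)/4) ≤ 2 * r ^ ((1:ℝ)/2) * D * P := by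
    have h : r * P ^ ((3:ℝ)/4) ≤ r ^ ((1:ℝ)/2) * P := by
      calc r * P ^ ((3:ℝ)/4) = r ^ ((1:ℝ)/2) * (r ^ ((1:ℝ)/2) * P ^ ((3:ℝ)/4)) := by
            rw [← mul_assoc, hrr]
        _ ≤ r ^ ((1:ℝ)/2) * (P ^ ((1:ℝ)/4) * P ^ ((3:ℝ)/4)) := by
            apply mul_le_mul_of_nonneg_left _ (Real.rpow_nonneg hr.le _)
            exact mul_le_mul_of_nonneg_right h14 (Real.rpow_nonneg hPpos.le _)
        _ = r ^ ((1:ℝ)/2) * P := by rw [hP43]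
    calc 2 * r * D * P ^ ((3:ℝ)/4) = 2 * D * (r * P ^ ((3:ℝ)/4)) := by ring
      _ ≤ 2 * D * (r ^ ((1:ℝ)/2) * P) := by
          apply mul_le_mul_of_nonneg_left h (by positivity)
      _ = 2 * r ^ ((1:ℝ)/2) * D * P := by ring
  have part2 : A * P ^ ((1:ℝ)/2) ≤ r⁻¹ * A * P := by
    have h2 : r * P ^ ((1:ℝ)/2) ≤ P := by
      calc r * P ^ ((1:ℝ)/2) ≤ P ^ ((1:ℝ)/2) * P ^ ((1:ℝ)/2) :=
            mul_le_mul_of_nonneg_right h12 (Real.rpow_nonneg hPpos.le _)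
        _ = P := hP12
    have h : P ^ ((1:ℝ)/2) ≤ r⁻¹ * P := by
      calc P ^ ((1:ℝ)/2) = r⁻¹ * (r * P ^ ((1:ℝ)/2)) := by
            field_simp
        _ ≤ r⁻¹ * P := mul_le_mul_of_nonneg_left h2 (inv_nonneg.2 hr.le)
    calc A * P ^ ((1:ℝ)/2) ≤ A * (r⁻¹ * P) := mul_le_mul_of_nonneg_left h hA0
      _ = r⁻¹ * A * P := by ring
  have hfinal : |u x| * P ≤ (r⁻¹ * A + 2 * r ^ ((1:ℝ)/2) * D) * P := by
    calc |u x| * P ≤ 2 * r * D * P ^ ((3:ℝ)/4) + A * P ^ ((1:ℝ)/2) := hmain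
      _ ≤ 2 * r ^ ((1:ℝ)/2) * D * P + r⁻¹ * A * P := add_le_add part1 part2
      _ = (r⁻¹ * A + 2 * r ^ ((1:ℝ)/2) * D) * P := by ring
  exact le_of_mul_le_mul_right hfinal hPpos

lemma gn_pointwise_opt (u : SchwartzMap E2 ℝ) (x : E2) :
    |u x| ≤ 3 * (eLpNorm (⇑u) 2 volume).toReal ^ ((1:ℝ)/3) *
      (eLpNorm (fun z => fderiv ℝ u z) 4 volume).toReal ^ ((2:ℝ)/3) := by
  set A : ℝ := (eLpNorm (⇑u) 2 volume).toReal with hA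
  set D : ℝ := (eLpNorm (fun z => fderiv ℝ u z) 4 volume).toReal with hD
  have hA0 : 0 ≤ A := ENNReal.toReal_nonneg
  have hD0 : 0 ≤ D := ENNReal.toReal_nonneg
  rcases hD0.eq_or_lt with hDz | hDpos
  · -- D = 0
    have key : ∀ ε > (0:ℝ), |u x| ≤ ε := by
      intro ε hε
      set r : ℝ := max 1 (A / ε) with hrdef
      have hrpos : 0 < r := lt_of_lt_of_le one_pos (le_max_left _ _)
      have h := gn_pointwise u x r hrpos
      rw [← hA, ← hD] at h
      have h1 : r⁻¹ * A ≤ ε := by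
        rw [inv_mul_le_iff₀ hrpos]
        calc A = ε * (A / ε) := by field_simp
          _ ≤ ε * r := by
              apply mul_le_mul_of_nonneg_left (le_max_right _ _) hε.le
          _ = r * ε := by ring
      rw [← hDz] at h
      simpa using h.trans (by linarith)
    have h0 : |u x| ≤ 0 := by
      refine le_of_forall_pos_le_add fun ε hε => ?_
      simpa using key ε hε
    calc |u x| ≤ 0 := h0
      _ ≤ 3 * A ^ ((1:ℝ)/3) * D ^ ((2:ℝ)/3) := by positivity
  rcases hA0.eq_or_lt with hAz | hApos
  · -- A = 0, D > 0
    have key : ∀ ε > (0:ℝ), |u x| ≤ ε := by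
      intro ε hε
      set s : ℝ := ε / (2 * D) with hsdef
      have hspos : 0 < s := by positivity
      have h := gn_pointwise u x (s ^ 2) (by positivity)
      rw [← hA, ← hD] at h
      have hsq : (s ^ 2) ^ ((1:ℝ)/2) = s := by
        rw [← Real.rpow_natCast s 2, ← Real.rpow_mul hspos.le]
        norm_num
      rw [hsq, ← hAz] at h
      have : 2 * s * D = ε := by
        rw [hsdef]
        field_simp
      simpa [this] using h.trans (by linarith [this])
    have h0 : |u x| ≤ 0 := by
      refine le_of_forall_pos_le_add fun ε hε => ?_
      simpa using key ε hε
    calc |u x| ≤ 0 := h0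
      _ ≤ 3 * A ^ ((1:ℝ)/3) * D ^ ((2:ℝ)/3) := by positivity
  · -- A > 0, D > 0
    set r : ℝ := (A / D) ^ ((2:ℝ)/3) with hrdef
    have hrpos : 0 < r := Real.rpow_pos_of_pos (div_pos hApos hDpos) _
    have h := gn_pointwise u x r hrpos
    rw [← hA, ← hD] at h
    have e1 : r⁻¹ * A = A ^ ((1:ℝ)/3) * D ^ ((2:ℝ)/3) := by
      have hAdiv : A / A ^ ((2:ℝ)/3) = A ^ ((1:ℝ)/3) := by
        nth_rewrite 1 [← Real.rpow_one A]
        rw [← Real.rpow_sub hApos]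
        norm_num
      calc r⁻¹ * A = (D ^ ((2:ℝ)/3) / A ^ ((2:ℝ)/3)) * A := by
            rw [hrdef, Real.div_rpow hA0 hDpos.le, inv_div]
        _ = D ^ ((2:ℝ)/3) * (A / A ^ ((2:ℝ)/3)) := by ring
        _ = A ^ ((1:ℝ)/3) * D ^ ((2:ℝ)/3) := by rw [hAdiv]; ring
    have e2 : 2 * r ^ ((1:ℝ)/2) * D = 2 * (A ^ ((1:ℝ)/3) * D ^ ((2:ℝ)/3)) := by
      have hr12 : r ^ ((1:ℝ)/2) = (A / D) ^ ((1:ℝ)/3) := by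
        rw [hrdef, ← Real.rpow_mul (div_nonneg hA0 hDpos.le)]
        norm_num
      have hDdiv : D / D ^ ((1:ℝ)/3) = D ^ ((2:ℝ)/3) := by
        nth_rewrite 1 [← Real.rpow_one D]
        rw [← Real.rpow_sub hDpos]
        norm_num
      calc 2 * r ^ ((1:ℝ)/2) * D = 2 * (A ^ ((1:ℝ)/3) / D ^ ((1:ℝ)/3)) * D := by
            rw [hr12, Real.div_rpow hA0 hDpos.le]
        _ = 2 * (A ^ ((1:ℝ)/3) * (D / D ^ ((1:ℝ)/3))) := by ring
        _ = 2 * (A ^ ((1:ℝ)/3) * D ^ ((2:ℝ)/3)) := by rw [hDdiv]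
    calc |u x| ≤ r⁻¹ * A + 2 * r ^ ((1:ℝ)/2) * D := h
      _ = 3 * A ^ ((1:ℝ)/3) * D ^ ((2:ℝ)/3) := by rw [e1, e2]; ring

/-- Gagliardo–Nirenberg: `‖u‖_∞ ≤ C ‖u‖₂^{1/3} ‖∇u‖₄^{2/3}` on ℝ². -/
theorem gagliardo_nirenberg_inf_four :
    ∃ C : ℝ, 0 < C ∧ ∀ u : SchwartzMap (EuclideanSpace ℝ (Fin 2)) ℝ,
      (eLpNorm (⇑u) ⊤ volume).toReal ≤
        C * (eLpNorm (⇑u) 2 volume).toReal ^ ((1 : ℝ) / 3) *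
          (eLpNorm (fun x => fderiv ℝ (⇑u) x) 4 volume).toReal ^ ((2 : ℝ) / 3) := by

  refine ⟨3, by norm_num, fun u => ?_⟩
  set M : ℝ := 3 * (eLpNorm (⇑u) 2 volume).toReal ^ ((1:ℝ)/3) *
      (eLpNorm (fun z => fderiv ℝ u z) 4 volume).toReal ^ ((2:ℝ)/3) with hM
  have hM0 : 0 ≤ M := by positivity
  have hbd : ∀ᵐ y ∂(volume : Measure E2), ‖u y‖ ≤ M :=
    Filter.Eventually.of_forall fun y => by
      rw [Real.norm_eq_abs]
      exact gn_pointwise_opt u y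
  rw [eLpNorm_exponent_top]
  exact ENNReal.toReal_le_of_le_ofReal hM0 (eLpNormEssSup_le_of_ae_bound hbd)
end

section
/- There is an absolute constant C such that for all Schwartz functions u on ℝ², the Ladyzhenskaya (Gagliardo–Nirenberg) inequality ‖u‖_{L⁴(ℝ²)} ≤ C ‖u‖_{L²(ℝ²)}^{1/2} ‖∇u‖_{L²(ℝ²)}^{1/2} holds. -/
open MeasureTheory Real Filter
open scoped ENNReal
open scoped Topology

section Aux
open Module NNReal
local notation "E2" => EuclideanSpace ℝ (Fin 2)

noncomputable def Kc : ℝ≥0∞ := 2 * (eLpNormLESNormFDerivOneConst (volume : Measure E2) 2)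

lemma Kc_ne_top : Kc ≠ ∞ := by
  simp [Kc, ENNReal.mul_ne_top]

lemma conj2 : NNReal.HolderConjugate (finrank ℝ E2) 2 := by
  rw [finrank_euclideanSpace_fin]
  exact_mod_cast NNReal.HolderConjugate.two_two

lemma core (v : E2 → ℝ) (hv : ContDiff ℝ 1 v) (h2v : HasCompactSupport v) :
    eLpNorm v 4 volume ^ (2:ℝ) ≤ Kc * eLpNorm v 2 volume * eLpNorm (fderiv ℝ v) 2 volume := by
  set w : E2 → ℝ := fun x => v x * v x with hw_def
  have hw : ContDiff ℝ 1 w := hv.mul hv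
  have h2w : HasCompactSupport w := h2v.mul_left
  have hsob := eLpNorm_le_eLpNorm_fderiv_one (volume : Measure E2) hw h2w conj2
  have hcast : ((2:ℝ≥0) : ℝ≥0∞) = 2 := by norm_cast
  rw [hcast] at hsob
  have hdv : Differentiable ℝ v := hv.differentiable one_ne_zero
  have h4 : eLpNorm w 2 volume = eLpNorm v 4 volume ^ (2:ℝ) := by
    have h := eLpNorm_norm_rpow (p := 2) (μ := (volume : Measure E2)) v two_pos
    have : w = fun x => ‖v x‖ ^ (2:ℝ) := funext fun x => by
      rw [Real.rpow_two, Real.norm_eq_abs, sq_abs, sq]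
    rw [this, h]
    norm_num [ENNReal.ofReal_ofNat]
  have hfd : ∀ x, fderiv ℝ w x = (2 * v x) • fderiv ℝ v x := fun x => by
    rw [hw_def]
    rw [fderiv_fun_mul (hdv x) (hdv x), ← add_smul, two_mul]
  have hcongr : (fderiv ℝ w) = (fun x => (2 * v x)) • (fun x => fderiv ℝ v x) := funext hfd
  have hH : eLpNorm (fderiv ℝ w) 1 volume
      ≤ 2 * (eLpNorm v 2 volume * eLpNorm (fderiv ℝ v) 2 volume) := by
    rw [hcongr]
    have h1 : AEStronglyMeasurable (fun x : E2 => fderiv ℝ v x) volume :=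
      (hv.continuous_fderiv one_ne_zero).aestronglyMeasurable
    have h2 : AEStronglyMeasurable (fun x : E2 => 2 * v x) volume :=
      (continuous_const.mul hv.continuous).aestronglyMeasurable
    refine le_trans (eLpNorm_smul_le_mul_eLpNorm (p := 2) (q := 2) (r := 1) h1 h2) ?_
    have h3 : (fun x : E2 => 2 * v x) = (2:ℝ) • v := by funext x; simp
    rw [h3, eLpNorm_const_smul]
    simp [nnnorm_two, mul_assoc, enorm_eq_nnnorm]
  calc eLpNorm v 4 volume ^ (2:ℝ) = eLpNorm w 2 volume := h4.symm
    _ ≤ eLpNormLESNormFDerivOneConst (volume : Measure E2) 2 * eLpNorm (fderiv ℝ w) 1 volume := hsob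
    _ ≤ eLpNormLESNormFDerivOneConst (volume : Measure E2) 2 *
        (2 * (eLpNorm v 2 volume * eLpNorm (fderiv ℝ v) 2 volume)) := mul_le_mul_right hH _
    _ = Kc * eLpNorm v 2 volume * eLpNorm (fderiv ℝ v) 2 volume := by unfold Kc; ring

lemma schwartz_mem2 {F : Type*} [NormedAddCommGroup F] [NormedSpace ℝ F]
    (f : SchwartzMap E2 F) : MemLp ⇑f 2 (volume : Measure E2) := by
  rw [memLp_two_iff_integrable_sq_norm f.continuous.aestronglyMeasurable]
  refine (f.integrable.norm.const_mul (SchwartzMap.seminorm ℝ 0 0 f)).mono'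
    ((f.continuous.norm.pow 2).aestronglyMeasurable) (Eventually.of_forall fun x => ?_)
  have h1 : ‖f x‖ ≤ SchwartzMap.seminorm ℝ 0 0 f := f.norm_le_seminorm ℝ x
  calc ‖‖f x‖ ^ 2‖ = ‖f x‖ * ‖f x‖ := by
        rw [Real.norm_eq_abs, abs_of_nonneg (by positivity), sq]
    _ ≤ SchwartzMap.seminorm ℝ 0 0 f * ‖f x‖ :=
        mul_le_mul_of_nonneg_right h1 (norm_nonneg _)

lemma mem2_fderiv (u : SchwartzMap E2 ℝ) :
    MemLp (fun x => fderiv ℝ (⇑u) x) 2 (volume : Measure E2) := by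
  have : (fun x => fderiv ℝ (⇑u) x) = ⇑(SchwartzMap.fderivCLM ℝ E2 ℝ u) := by funext x; simp
  rw [this]; exact schwartz_mem2 _

noncomputable def bump : ContDiffBump (0 : E2) := ⟨1, 2, one_pos, one_lt_two⟩

noncomputable def sc (n : ℕ) : ℝ := ((n : ℝ) + 1)⁻¹

lemma sc_pos (n : ℕ) : 0 < sc n := by unfold sc; positivity

noncomputable def cutoff (n : ℕ) : E2 → ℝ := fun x => bump (sc n • x)

lemma cutoff_contDiff (n : ℕ) : ContDiff ℝ 1 (cutoff n) :=
  (bump.contDiff (n := 1)).comp (contDiff_const_smul _)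

lemma cutoff_compactSupport (n : ℕ) : HasCompactSupport (cutoff n) :=
  bump.hasCompactSupport.comp_homeomorph (Homeomorph.smulOfNeZero (sc n) (sc_pos n).ne')

lemma cutoff_le_one (n : ℕ) (x : E2) : |cutoff n x| ≤ 1 := by
  show |bump (sc n • x)| ≤ 1
  rw [abs_of_nonneg bump.nonneg]; exact bump.le_one

lemma cutoff_eq_one (n : ℕ) (x : E2) (hx : ‖x‖ ≤ (n : ℝ) + 1) : cutoff n x = 1 := by
  apply bump.one_of_mem_closedBall
  rw [Metric.mem_closedBall, dist_zero_right, norm_smul, norm_of_nonneg (sc_pos n).le]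
  show sc n * ‖x‖ ≤ bump.rIn
  have h1 : bump.rIn = 1 := rfl
  rw [h1, sc, inv_mul_le_iff₀ (by positivity), mul_one]
  exact hx

lemma cutoff_fderiv (n : ℕ) (x : E2) :
    fderiv ℝ (cutoff n) x = sc n • fderiv ℝ (⇑bump) (sc n • x) := by
  have h1 : cutoff n = (⇑bump) ∘ (fun x : E2 => sc n • x) := rfl
  have hbd : DifferentiableAt ℝ (⇑bump) (sc n • x) :=
    ((bump.contDiff (n := 1)).differentiable one_ne_zero) _
  have hsd : DifferentiableAt ℝ (fun x : E2 => sc n • x) x :=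
    (differentiable_id.const_smul (sc n)) x
  rw [h1, fderiv_comp x hbd hsd]
  have h2 : fderiv ℝ (fun x : E2 => sc n • x) x = sc n • ContinuousLinearMap.id ℝ E2 := by
    have := fderiv_fun_const_smul (𝕜 := ℝ) (f := fun x : E2 => x) (x := x) differentiableAt_fun_id (sc n)
    rw [this, fderiv_id']
  rw [h2, ContinuousLinearMap.comp_smul, ContinuousLinearMap.comp_id]

end Aux

/-- Ladyzhenskaya inequality: `‖u‖₄ ≤ C ‖u‖₂^{1/2} ‖∇u‖₂^{1/2}` on ℝ². -/
theorem ladyzhenskaya :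
    ∃ C : ℝ, 0 < C ∧ ∀ u : SchwartzMap (EuclideanSpace ℝ (Fin 2)) ℝ,
      (eLpNorm (⇑u) 4 volume).toReal ≤
        C * (eLpNorm (⇑u) 2 volume).toReal ^ ((1 : ℝ) / 2) *
          (eLpNorm (fun x => fderiv ℝ (⇑u) x) 2 volume).toReal ^ ((1 : ℝ) / 2) := by
  refine ⟨max ((Kc.toReal) ^ ((1:ℝ)/2)) 1, lt_of_lt_of_le one_pos (le_max_right _ _), fun u => ?_⟩
  set a := eLpNorm (⇑u) 2 volume with ha_def
  set b := eLpNorm (fun x => fderiv ℝ (⇑u) x) 2 volume with hb_def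
  have ha_top : a ≠ ∞ := (schwartz_mem2 u).2.ne
  have hb_top : b ≠ ∞ := (mem2_fderiv u).2.ne
  obtain ⟨M0, hM0⟩ := (bump.hasCompactSupport.fderiv (𝕜 := ℝ)).exists_bound_of_continuous
      ((bump.contDiff (n := 1)).continuous_fderiv one_ne_zero)
  set M := max M0 0 with hM_def
  have hMnn : 0 ≤ M := le_max_right _ _
  have hM : ∀ x, ‖fderiv ℝ (⇑bump) x‖ ≤ M := fun x => (hM0 x).trans (le_max_left _ _)
  set v : ℕ → _ → ℝ := fun n => fun x => cutoff n x * u x with hv_def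
  have hu1 : ContDiff ℝ 1 ⇑u := u.smooth 1
  have hv1 : ∀ n, ContDiff ℝ 1 (v n) := fun n => (cutoff_contDiff n).mul hu1
  have hv2 : ∀ n, HasCompactSupport (v n) := fun n => (cutoff_compactSupport n).mul_right
  have hvaesm : ∀ n, AEStronglyMeasurable (v n) volume := fun n =>
    ((cutoff_contDiff n).continuous.mul u.continuous).aestronglyMeasurable
  have ha_n : ∀ n, eLpNorm (v n) 2 volume ≤ a := fun n => eLpNorm_mono fun x => by
    rw [Real.norm_eq_abs, Real.norm_eq_abs, abs_mul]
    calc |cutoff n x| * |u x| ≤ 1 * |u x| :=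
          mul_le_mul_of_nonneg_right (cutoff_le_one n x) (abs_nonneg _)
      _ = |u x| := one_mul _
  have hfd_n : ∀ n x, fderiv ℝ (v n) x
      = cutoff n x • fderiv ℝ (⇑u) x + u x • fderiv ℝ (cutoff n) x := fun n x =>
    fderiv_fun_mul ((cutoff_contDiff n).differentiable one_ne_zero x) (hu1.differentiable one_ne_zero x)
  have hb_n : ∀ n, eLpNorm (fderiv ℝ (v n)) 2 volume ≤ b + ENNReal.ofReal (sc n * M) * a := by
    intro n
    have heq : fderiv ℝ (v n) = (fun x => cutoff n x • fderiv ℝ (⇑u) x)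
        + (fun x => u x • fderiv ℝ (cutoff n) x) := funext fun x => hfd_n n x
    rw [heq]
    have hA : AEStronglyMeasurable (fun x => cutoff n x • fderiv ℝ (⇑u) x) volume :=
      ((cutoff_contDiff n).continuous.smul (hu1.continuous_fderiv one_ne_zero)).aestronglyMeasurable
    have hB : AEStronglyMeasurable (fun x => u x • fderiv ℝ (cutoff n) x) volume :=
      (u.continuous.smul ((cutoff_contDiff n).continuous_fderiv one_ne_zero)).aestronglyMeasurable
    have hadd := eLpNorm_add_le (p := 2) hA hB (by norm_num)
    refine le_trans hadd (add_le_add ?_ ?_)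
    · refine eLpNorm_mono fun x => ?_
      rw [norm_smul, Real.norm_eq_abs]
      calc |cutoff n x| * ‖fderiv ℝ (⇑u) x‖ ≤ 1 * ‖fderiv ℝ (⇑u) x‖ :=
            mul_le_mul_of_nonneg_right (cutoff_le_one n x) (norm_nonneg _)
        _ = ‖fderiv ℝ (⇑u) x‖ := one_mul _
    · refine le_trans (eLpNorm_mono (g := fun x => (sc n * M) * u x) fun x => ?_) ?_
      · rw [norm_smul, cutoff_fderiv, norm_smul, Real.norm_eq_abs (sc n),
          abs_of_nonneg (sc_pos n).le, norm_mul, Real.norm_eq_abs (sc n * M),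
          abs_of_nonneg (mul_nonneg (sc_pos n).le hMnn)]
        calc ‖u x‖ * (sc n * ‖fderiv ℝ (⇑bump) (sc n • x)‖)
            ≤ ‖u x‖ * (sc n * M) := by
              refine mul_le_mul_of_nonneg_left ?_ (norm_nonneg _)
              exact mul_le_mul_of_nonneg_left (hM _) (sc_pos n).le
          _ = sc n * M * ‖u x‖ := by ring
      · have h5 : (fun x : EuclideanSpace ℝ (Fin 2) => (sc n * M) * u x)
            = (sc n * M) • ⇑u := by funext x; simp
        rw [h5, eLpNorm_const_smul,
          Real.enorm_eq_ofReal (mul_nonneg (sc_pos n).le hMnn)]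
  have hcore : ∀ n, eLpNorm (v n) 4 volume ^ (2:ℝ)
      ≤ Kc * a * (b + ENNReal.ofReal (sc n * M) * a) := fun n =>
    (core (v n) (hv1 n) (hv2 n)).trans
      (mul_le_mul' (mul_le_mul' le_rfl (ha_n n)) (hb_n n))
  have hroot : ∀ n, eLpNorm (v n) 4 volume
      ≤ (Kc * a * (b + ENNReal.ofReal (sc n * M) * a)) ^ ((1:ℝ)/2) := by
    intro n
    have h := ENNReal.rpow_le_rpow (hcore n) (by norm_num : (0:ℝ) ≤ 1/2)
    rwa [← ENNReal.rpow_mul, show (2:ℝ)*(1/2) = 1 by norm_num, ENNReal.rpow_one] at h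
  have hlim_pt : ∀ x, Tendsto (fun n => v n x) atTop (𝓝 (u x)) := by
    intro x
    refine tendsto_const_nhds.congr' ?_
    filter_upwards [eventually_ge_atTop ⌈‖x‖⌉₊] with n hn
    have hx : ‖x‖ ≤ (n:ℝ) + 1 := by
      refine (Nat.le_ceil _).trans ?_
      have : (⌈‖x‖⌉₊ : ℝ) ≤ (n : ℝ) := Nat.cast_le.2 hn
      linarith
    simp only [hv_def, cutoff_eq_one n x hx, one_mul]
  have hliminf : eLpNorm (⇑u) 4 volume ≤ atTop.liminf (fun n => eLpNorm (v n) 4 volume) :=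
    Lp.eLpNorm_lim_le_liminf_eLpNorm hvaesm _ (ae_of_all _ hlim_pt)
  have htends : Tendsto (fun n => (Kc * a * (b + ENNReal.ofReal (sc n * M) * a)) ^ ((1:ℝ)/2))
      atTop (𝓝 ((Kc * a * b) ^ ((1:ℝ)/2))) := by
    have h0 : Tendsto (fun n => ENNReal.ofReal (sc n * M)) atTop (𝓝 0) := by
      rw [← ENNReal.ofReal_zero]
      apply ENNReal.tendsto_ofReal
      have hsc : Tendsto sc atTop (𝓝 0) := by
        unfold sc; simpa [one_div] using tendsto_one_div_add_atTop_nhds_zero_nat (𝕜 := ℝ)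
      simpa using hsc.mul_const M
    have h1 : Tendsto (fun n => ENNReal.ofReal (sc n * M) * a) atTop (𝓝 0) := by
      simpa using ENNReal.Tendsto.mul_const h0 (Or.inr ha_top)
    have h2 : Tendsto (fun n => b + ENNReal.ofReal (sc n * M) * a) atTop (𝓝 b) := by
      simpa using tendsto_const_nhds.add h1
    have h3 : Tendsto (fun n => Kc * a * (b + ENNReal.ofReal (sc n * M) * a)) atTop
        (𝓝 (Kc * a * b)) :=
      ENNReal.Tendsto.const_mul h2 (Or.inr (ENNReal.mul_ne_top Kc_ne_top ha_top))
    exact (ENNReal.continuous_rpow_const.tendsto _).comp h3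
  have hX : eLpNorm (⇑u) 4 volume ≤ (Kc * a * b) ^ ((1:ℝ)/2) := by
    refine hliminf.trans ?_
    refine le_trans (liminf_le_liminf (Eventually.of_forall hroot)) ?_
    rw [htends.liminf_eq]
  have hfin : (Kc * a * b) ^ ((1:ℝ)/2) ≠ ∞ :=
    ENNReal.rpow_ne_top_of_nonneg (by norm_num)
      (ENNReal.mul_ne_top (ENNReal.mul_ne_top Kc_ne_top ha_top) hb_top)
  have hfinal := ENNReal.toReal_mono hfin hX
  rw [← ENNReal.toReal_rpow, ENNReal.toReal_mul, ENNReal.toReal_mul] at hfinal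
  refine hfinal.trans ?_
  rw [Real.mul_rpow (by positivity) ENNReal.toReal_nonneg,
    Real.mul_rpow ENNReal.toReal_nonneg ENNReal.toReal_nonneg]
  refine mul_le_mul_of_nonneg_right
    (mul_le_mul_of_nonneg_right (le_max_left _ _) (Real.rpow_nonneg ENNReal.toReal_nonneg _))
    (Real.rpow_nonneg ENNReal.toReal_nonneg _)
end
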